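/- (IMLL-AtComp: atomic soundness and completeness) For every base B, all finite multisets of atoms P and S, and every atom q: P ⨾ S ⊢_B q if and only if P ⊩_B^S q. -/

import Mathlib

/-- Formulas of intuitionistic multiplicative linear logic over a
countably infinite set of atoms (here: `ℕ`). -/
inductive MForm : Type where
  | atom : ℕ → MForm
  | tensor : MForm → MForm → MForm
  | unit : MForm
  | limp : MForm → MForm → MForm
deriving DecidableEq

/-- An atomic rule `(P₁ ▷ p₁, …, Pₙ ▷ pₙ) ⇒ p`: a (possibly empty) finite
set of atomic sequents together with a conclusion atom. -/
structure MRule : Type where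
  prems : Finset (Multiset ℕ × ℕ)
  concl : ℕ

/-- A base is a set of atomic rules. -/
abbrev MBase := Set MRule

/-- Derivability in a base `B`: `P ⊢_B p`. -/
inductive MDer (B : MBase) : Multiset ℕ → ℕ → Prop where
  | ref (p : ℕ) : MDer B {p} p
  | app {r : MRule} (hr : r ∈ B) (S : Multiset ℕ × ℕ → Multiset ℕ)
      (h : ∀ pr ∈ r.prems, MDer B (S pr + pr.1) pr.2) :
      MDer B (r.prems.sum S) r.concl

/-- The resource-indexed support relation `⊩_B^P φ`. -/
def MSupp : MForm → MBase → Multiset ℕ → Prop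
  | .atom p, B, P => MDer B P p
  | .tensor φ ψ, B, P => ∀ X : MBase, B ⊆ X → ∀ U : Multiset ℕ, ∀ p : ℕ,
      (∀ Y : MBase, X ⊆ Y → ∀ V : Multiset ℕ,
        (∃ V₁ V₂ : Multiset ℕ, V = V₁ + V₂ ∧ MSupp φ Y V₁ ∧ MSupp ψ Y V₂) →
        MDer Y (U + V) p) →
      MDer X (P + U) p
  | .unit, B, P => ∀ X : MBase, B ⊆ X → ∀ U : Multiset ℕ, ∀ p : ℕ,
      MDer X U p → MDer X (P + U) p
  | .limp φ ψ, B, P => ∀ X : MBase, B ⊆ X → ∀ U : Multiset ℕ,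
      MSupp φ X U → MSupp ψ X (P + U)

/-- Support of a multiset of formulas: `⊩_B^P Γ`, obtained by splitting
the resources `P` among the members of `Γ`. -/
inductive MSuppCtx (B : MBase) : Multiset ℕ → Multiset MForm → Prop where
  | nil : MSuppCtx B 0 0
  | cons {P Q : Multiset ℕ} {φ : MForm} {Γ : Multiset MForm} :
      MSupp φ B P → MSuppCtx B Q Γ → MSuppCtx B (P + Q) (φ ::ₘ Γ)

/-- Support of a sequent: `Γ ⊩_B^P φ` (clause (Inf)). -/
def MSuppInf (Γ : Multiset MForm) (B : MBase) (P : Multiset ℕ) (φ : MForm) : Prop :=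
  ∀ X : MBase, B ⊆ X → ∀ U : Multiset ℕ, MSuppCtx X U Γ → MSupp φ X (P + U)

/-- Validity: `Γ ⊩ φ` iff `Γ ⊩_B^∅ φ` for every base `B`. -/
def MValid (Γ : Multiset MForm) (φ : MForm) : Prop :=
  ∀ B : MBase, MSuppInf Γ B 0 φ

/-- The natural deduction system NIMLL: `Γ ⊢ φ`. -/
inductive NIMLL : Multiset MForm → MForm → Prop where
  | ax (φ : MForm) : NIMLL {φ} φ
  | limpI {Γ : Multiset MForm} {φ ψ : MForm} :
      NIMLL (φ ::ₘ Γ) ψ → NIMLL Γ (.limp φ ψ)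
  | limpE {Γ Δ : Multiset MForm} {φ ψ : MForm} :
      NIMLL Γ (.limp φ ψ) → NIMLL Δ φ → NIMLL (Γ + Δ) ψ
  | unitI : NIMLL 0 .unit
  | unitE {Γ Δ : Multiset MForm} {φ : MForm} :
      NIMLL Γ φ → NIMLL Δ .unit → NIMLL (Γ + Δ) φ
  | tensorI {Γ Δ : Multiset MForm} {φ ψ : MForm} :
      NIMLL Γ φ → NIMLL Δ ψ → NIMLL (Γ + Δ) (.tensor φ ψ)
  | tensorE {Γ Δ : Multiset MForm} {φ ψ χ : MForm} :
      NIMLL Γ (.tensor φ ψ) → NIMLL (φ ::ₘ ψ ::ₘ Δ) χ → NIMLL (Γ + Δ) χ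

theorem mder_mono {B X : MBase} (hBX : B ⊆ X) {T : Multiset ℕ} {q : ℕ}
    (h : MDer B T q) : MDer X T q := by
  induction h with
  | ref p => exact .ref p
  | app hr S h ih => exact .app (hBX hr) S ih

theorem mder_cut {X : MBase} {T U : Multiset ℕ} {p q : ℕ}
    (hT : MDer X T q) (hp : p ∈ T) (hU : MDer X U p) :
    MDer X (T.erase p + U) q := by
  induction hT with
  | ref r =>
    have : p = r := by simpa using hp
    subst this
    simpa using hU
  | @app r hr S h ih =>
    obtain ⟨pr₀, hpr₀, hpmem⟩ := Multiset.mem_sum.mp hp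
    classical
    set S' : Multiset ℕ × ℕ → Multiset ℕ :=
      fun pr => if pr = pr₀ then (S pr₀).erase p + U else S pr with hS'
    have hprem : ∀ pr ∈ r.prems, MDer X (S' pr + pr.1) pr.2 := by
      intro pr hpr
      by_cases hcase : pr = pr₀
      · subst hcase
        have h1 := ih pr hpr (by exact Multiset.mem_add.mpr (Or.inl hpmem))
        have h2 : (S pr + pr.1).erase p = (S pr).erase p + pr.1 := by
          rw [Multiset.erase_add_left_pos _ hpmem]
        rw [h2] at h1
        have h3 : S' pr + pr.1 = (S pr).erase p + pr.1 + U := by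
          simp [hS', add_right_comm]
        rw [h3]
        exact h1
      · have h3 : S' pr = S pr := by simp [hS', hcase]
        rw [h3]
        exact h pr hpr
    have hconc := MDer.app hr S' hprem
    have hsum : r.prems.sum S' = (r.prems.sum S).erase p + U := by
      rw [← Finset.sum_erase_add _ _ hpr₀, ← Finset.sum_erase_add _ S hpr₀]
      have : ∀ pr ∈ r.prems.erase pr₀, S' pr = S pr := by
        intro pr hpr
        have : pr ≠ pr₀ := Finset.ne_of_mem_erase hpr
        simp [hS', this]
      rw [Finset.sum_congr rfl this]
      rw [if_pos rfl, Multiset.erase_add_right_pos _ hpmem]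
      ac_rfl
    rwa [hsum] at hconc

theorem msuppctx_subst {X : MBase} {U : Multiset ℕ} {Γ : Multiset MForm}
    (hctx : MSuppCtx X U Γ) :
    ∀ P S : Multiset ℕ, ∀ q : ℕ, Γ = P.map MForm.atom →
      MDer X (P + S) q → MDer X (S + U) q := by
  induction hctx with
  | nil =>
    intro P S q hΓ hder
    have hP : P = 0 := by
      rcases Multiset.map_eq_zero.mp hΓ.symm with h
      exact h
    subst hP
    simpa using hder
  | @cons P₁ Q φ Γ hφ _ ih =>
    intro P S q hΓ hder
    obtain ⟨a, ha, hfa, hmap⟩ := (Multiset.map_eq_cons _ _ _ _).mpr hΓ.symm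
    subst hfa
    have hUa : MDer X P₁ a := hφ
    have hcut := mder_cut hder (Multiset.mem_add.mpr (Or.inl ha)) hUa
    rw [Multiset.erase_add_left_pos _ ha] at hcut
    have hcut' : MDer X (P.erase a + (S + P₁)) q := by
      rwa [add_assoc] at hcut
    have := ih (P.erase a) (S + P₁) q hmap.symm hcut'
    rwa [add_assoc] at this

theorem msuppctx_self (B : MBase) (P : Multiset ℕ) :
    MSuppCtx B P (P.map MForm.atom) := by
  induction P using Multiset.induction with
  | empty => exact .nil
  | cons a P ih =>
    have := MSuppCtx.cons (P := {a}) (φ := MForm.atom a) (MDer.ref a) ih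
    simpa using this

/-- (IMLL-AtComp: atomic soundness and completeness)
`P ⨾ S ⊢_B q` iff `P ⊩_B^S q`. -/
theorem imll_at_comp (B : MBase) (P S : Multiset ℕ) (q : ℕ) :
    MDer B (P + S) q ↔ MSuppInf (P.map MForm.atom) B S (.atom q) := by
  constructor
  · intro h X hBX U hctx
    exact msuppctx_subst hctx P S q rfl (mder_mono hBX h)
  · intro h
    have := h B (le_refl B) P (msuppctx_self B P)
    simpa [add_comm, MSupp] using this
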